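/- Let A and B be disjoint nonempty finite sets, U = A ∪ B, and Y a finite set. Let P_U^A be a pmf on A, P_U^B a pmf on B, W₀ a pmf on Y with W₀(y) > 0 for all y, and for each u ∈ A let T(·|u) be a pmf on Y and for each u ∈ B let R(·|u) be a pmf on Y. For (μ₁,μ₂) ∈ ℝ² define P^{μ₁,μ₂} : U × Y → ℝ by P^{μ₁,μ₂}(u,y) = (1−μ₁)·P_U^A(u)·((1−μ₂)·W₀(y) + μ₂·T(y|u)) for u ∈ A and P^{μ₁,μ₂}(u,y) = μ₁·P_U^B(u)·R(y|u) for u ∈ B, and let I(μ₁,μ₂) denote the mutual information of P^{μ₁,μ₂}. Then the map μ₂ ↦ I(0, μ₂) has a derivative at μ₂ = 0, equal to 0. -/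

import Mathlib

open Real

/-- Mutual information of a joint function `P` on a product of finite alphabets. -/
noncomputable def mutualInfo {U Y : Type*} [Fintype U] [Fintype Y] (P : U → Y → ℝ) : ℝ :=
  ∑ u, ∑ y, P u y *
    (Real.log (P u y) - Real.log (∑ y', P u y') - Real.log (∑ u', P u' y))

lemma mutualInfo_restrict {U Y : Type*} [Fintype U] [Fintype Y] [DecidableEq U]
    (A : Finset U) (P : U → Y → ℝ) (h0 : ∀ u ∉ A, ∀ y, P u y = 0) :
    mutualInfo P = ∑ u ∈ A, ∑ y, P u y *
      (Real.log (P u y) - Real.log (∑ y', P u y') -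
       Real.log (∑ u' ∈ A, P u' y)) := by
  unfold mutualInfo
  have h1 : (∑ u, ∑ y, P u y *
        (Real.log (P u y) - Real.log (∑ y', P u y') - Real.log (∑ u', P u' y)))
      = ∑ u ∈ A, ∑ y, P u y *
        (Real.log (P u y) - Real.log (∑ y', P u y') - Real.log (∑ u', P u' y)) := by
    refine (Finset.sum_subset (Finset.subset_univ A) ?_).symm
    intro u _ hu
    exact Finset.sum_eq_zero fun y _ => by rw [h0 u hu y, zero_mul]
  rw [h1]
  refine Finset.sum_congr rfl fun u hu => Finset.sum_congr rfl fun y _ => ?_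
  have h2 : (∑ u', P u' y) = ∑ u' ∈ A, P u' y :=
    (Finset.sum_subset (Finset.subset_univ A) (fun u' _ hu' => h0 u' hu' y)).symm
  rw [h2]

theorem stmt_1 {U Y : Type*} [Fintype U] [Fintype Y] [DecidableEq U]
    (A B : Finset U) (hdisj : Disjoint A B) (hAne : A.Nonempty) (hBne : B.Nonempty)
    (hcover : A ∪ B = Finset.univ)
    (PA PB : U → ℝ) (W₀ : Y → ℝ) (T R : U → Y → ℝ)
    (hPA0 : ∀ u ∈ A, 0 ≤ PA u) (hPA1 : ∑ u ∈ A, PA u = 1)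
    (hPB0 : ∀ u ∈ B, 0 ≤ PB u) (hPB1 : ∑ u ∈ B, PB u = 1)
    (hW0pos : ∀ y, 0 < W₀ y) (hW0sum : ∑ y, W₀ y = 1)
    (hT0 : ∀ u ∈ A, ∀ y, 0 ≤ T u y) (hT1 : ∀ u ∈ A, ∑ y, T u y = 1)
    (hR0 : ∀ u ∈ B, ∀ y, 0 ≤ R u y) (hR1 : ∀ u ∈ B, ∑ y, R u y = 1)
    (I : ℝ → ℝ → ℝ)
    (hI : ∀ μ₁ μ₂, I μ₁ μ₂ = mutualInfo (fun (u : U) (y : Y) =>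
      if u ∈ A then (1 - μ₁) * PA u * ((1 - μ₂) * W₀ y + μ₂ * T u y)
      else μ₁ * PB u * R u y)) :
    HasDerivAt (fun μ₂ => I 0 μ₂) 0 0 := by
  classical
  have hW0ne : ∀ y, W₀ y ≠ 0 := fun y => (hW0pos y).ne'
  have hq0 : ∀ (u : U) (y : Y), (1 - (0:ℝ)) * W₀ y + 0 * T u y = W₀ y := by
    intro u y; ring
  have hqb0 : ∀ y : Y, (∑ u ∈ A, PA u * ((1 - (0:ℝ)) * W₀ y + 0 * T u y)) = W₀ y := by
    intro y
    simp only [hq0]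
    rw [← Finset.sum_mul, hPA1, one_mul]
  have hqd : ∀ (u : U) (y : Y), HasDerivAt (fun μ : ℝ => (1 - μ) * W₀ y + μ * T u y)
      (T u y - W₀ y) 0 := by
    intro u y
    have h1 := (((hasDerivAt_const (0:ℝ) (1:ℝ)).sub (hasDerivAt_id (0:ℝ))).mul_const (W₀ y)).add
        ((hasDerivAt_id (0:ℝ)).mul_const (T u y))
    exact h1.congr_deriv (by ring)
  have hqbd : ∀ y : Y, HasDerivAt (fun μ : ℝ => ∑ u ∈ A, PA u * ((1 - μ) * W₀ y + μ * T u y))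
      ((∑ u ∈ A, PA u * T u y) - W₀ y) 0 := by
    intro y
    have h1 := HasDerivAt.fun_sum (fun u (_ : u ∈ A) => (hqd u y).const_mul (PA u))
    refine h1.congr_deriv ?_
    simp only [mul_sub, Finset.sum_sub_distrib]
    rw [← Finset.sum_mul, hPA1, one_mul]
  -- the smooth surrogate g and its derivative
  have hgd : HasDerivAt (fun μ : ℝ => ∑ u ∈ A, ∑ y,
      PA u * (((1 - μ) * W₀ y + μ * T u y) *
        (Real.log ((1 - μ) * W₀ y + μ * T u y) -
         Real.log (∑ u' ∈ A, PA u' * ((1 - μ) * W₀ y + μ * T u' y)))))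
      0 0 := by
    have key : ∀ u ∈ A, ∀ y : Y, HasDerivAt (fun μ : ℝ =>
        PA u * (((1 - μ) * W₀ y + μ * T u y) *
          (Real.log ((1 - μ) * W₀ y + μ * T u y) -
           Real.log (∑ u' ∈ A, PA u' * ((1 - μ) * W₀ y + μ * T u' y)))))
        (PA u * (T u y - ∑ u' ∈ A, PA u' * T u' y)) 0 := by
      intro u hu y
      have hlq : HasDerivAt (fun μ : ℝ => Real.log ((1 - μ) * W₀ y + μ * T u y))
          ((T u y - W₀ y) / W₀ y) 0 := by
        have h := (hqd u y).log (by rw [hq0]; exact hW0ne y)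
        rwa [hq0] at h
      have hlqb : HasDerivAt (fun μ : ℝ =>
          Real.log (∑ u' ∈ A, PA u' * ((1 - μ) * W₀ y + μ * T u' y)))
          (((∑ u' ∈ A, PA u' * T u' y) - W₀ y) / W₀ y) 0 := by
        have h := (hqbd y).log (by rw [hqb0]; exact hW0ne y)
        rwa [hqb0] at h
      have h2 := ((hqd u y).mul (hlq.sub hlqb)).const_mul (PA u)
      refine h2.congr_deriv ?_
      simp only [Pi.sub_apply]
      rw [hq0, hqb0, sub_self, mul_zero, zero_add, div_sub_div_same,
        mul_comm (W₀ y), div_mul_cancel₀ _ (hW0ne y)]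
      ring
    have hTbsum : (∑ y, ∑ u' ∈ A, PA u' * T u' y) = 1 := by
      rw [Finset.sum_comm]
      calc (∑ u' ∈ A, ∑ y, PA u' * T u' y) = ∑ u' ∈ A, PA u' := by
            refine Finset.sum_congr rfl fun u' hu' => ?_
            rw [← Finset.mul_sum, hT1 u' hu', mul_one]
        _ = 1 := hPA1
    have h3 := HasDerivAt.fun_sum (fun u hu => HasDerivAt.fun_sum (fun y (_ : y ∈ Finset.univ) => key u hu y))
    refine h3.congr_deriv ?_
    refine Finset.sum_eq_zero fun u hu => ?_
    have h4 : (∑ y, PA u * (T u y - ∑ u' ∈ A, PA u' * T u' y))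
        = PA u * ((∑ y, T u y) - ∑ y, ∑ u' ∈ A, PA u' * T u' y) := by
      rw [← Finset.sum_sub_distrib, Finset.mul_sum]
    rw [h4, hT1 u hu, hTbsum, sub_self, mul_zero]
  -- `I 0 ·` agrees with the surrogate near 0
  have hpos : ∀ᶠ μ : ℝ in nhds 0, ∀ u ∈ A, ∀ y : Y, 0 < (1 - μ) * W₀ y + μ * T u y := by
    rw [Filter.eventually_all_finset]
    intro u _
    rw [Filter.eventually_all]
    intro y
    have hc : ContinuousAt (fun μ : ℝ => (1 - μ) * W₀ y + μ * T u y) 0 :=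
      (hqd u y).continuousAt
    have hmem : Set.Ioi (0:ℝ) ∈ nhds ((1 - (0:ℝ)) * W₀ y + 0 * T u y) := by
      rw [hq0]; exact Ioi_mem_nhds (hW0pos y)
    filter_upwards [hc.eventually_mem hmem] with μ hμ using hμ
  have hev : (fun μ₂ => I 0 μ₂) =ᶠ[nhds 0] (fun μ : ℝ => ∑ u ∈ A, ∑ y,
      PA u * (((1 - μ) * W₀ y + μ * T u y) *
        (Real.log ((1 - μ) * W₀ y + μ * T u y) -
         Real.log (∑ u' ∈ A, PA u' * ((1 - μ) * W₀ y + μ * T u' y))))) := by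
    filter_upwards [hpos] with μ hμ
    rw [hI]
    rw [mutualInfo_restrict A _ (fun u hu y => by simp [hu])]
    refine Finset.sum_congr rfl fun u hu => Finset.sum_congr rfl fun y _ => ?_
    simp only [if_pos hu]
    have hrowEq : (∑ y' : Y, (1 - (0:ℝ)) * PA u * ((1 - μ) * W₀ y' + μ * T u y'))
        = PA u := by
      have h1 : ∀ y' : Y, (1 - (0:ℝ)) * PA u * ((1 - μ) * W₀ y' + μ * T u y')
          = PA u * ((1 - μ) * W₀ y' + μ * T u y') := fun y' => by ring
      rw [Finset.sum_congr rfl fun y' _ => h1 y', ← Finset.mul_sum,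
        Finset.sum_add_distrib, ← Finset.mul_sum, ← Finset.mul_sum, hW0sum,
        hT1 u hu]
      ring
    have hcolEq : (∑ u' ∈ A, if u' ∈ A
          then (1 - (0:ℝ)) * PA u' * ((1 - μ) * W₀ y + μ * T u' y)
          else 0 * PB u' * R u' y)
        = ∑ u' ∈ A, PA u' * ((1 - μ) * W₀ y + μ * T u' y) :=
      Finset.sum_congr rfl fun u' hu' => by rw [if_pos hu']; ring
    rw [hrowEq, hcolEq]
    rcases (hPA0 u hu).lt_or_eq with hPApos | hPAzero
    · have hqpos := hμ u hu y
      have h2 : (1 - (0:ℝ)) * PA u * ((1 - μ) * W₀ y + μ * T u y)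
          = PA u * ((1 - μ) * W₀ y + μ * T u y) := by ring
      rw [h2, Real.log_mul hPApos.ne' hqpos.ne']
      ring
    · rw [← hPAzero]
      simp
  exact hgd.congr_of_eventuallyEq hev
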